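/- Partial fraction identity: n^{n−2} x^{n−1} / ∏_{k=0}^{n−1}(1 − x n((n−1)/2 − k)) = (1/n!) Σ_{k=0}^{n−1} (−1)^k binom(n−1,k) / (1 − x n((n−1)/2 − k)), as an identity of rational functions in x. -/

import Mathlib

open Polynomial Finset

noncomputable def cc (n k : ℕ) : ℚ := (n : ℚ) * (((n : ℚ) - 1) / 2 - (k : ℚ))

lemma cc_inj {n : ℕ} (hn : 1 ≤ n) {k k' : ℕ} (h : cc n k = cc n k') : k = k' := by
  have hne : (n : ℚ) ≠ 0 := Nat.cast_ne_zero.mpr (by omega)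
  unfold cc at h
  field_simp at h
  have h2 : (k : ℚ) = k' := by linarith
  exact_mod_cast h2

lemma cc_sub (n j k : ℕ) : cc n k - cc n j = (n : ℚ) * ((j : ℚ) - k) := by
  unfold cc; ring

lemma prod_erase_sub {n k : ℕ} (hk : k < n) :
    ∏ j ∈ (range n).erase k, ((j : ℚ) - k) =
      (-1) ^ k * (k.factorial : ℚ) * ((n - 1 - k).factorial : ℚ) := by
  have hsplit : (range n).erase k = range k ∪ Ico (k + 1) n := by
    ext j; simp only [Finset.mem_erase, Finset.mem_range, Finset.mem_union, Finset.mem_Ico]; omega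
  have hdisj : Disjoint (range k) (Ico (k + 1) n) := by
    simp only [Finset.disjoint_left, Finset.mem_range, Finset.mem_Ico]; omega
  rw [hsplit, Finset.prod_union hdisj]
  have h1 : ∏ j ∈ range k, ((j : ℚ) - k) = (-1) ^ k * (k.factorial : ℚ) := by
    calc ∏ j ∈ range k, ((j : ℚ) - k) = ∏ j ∈ range k, (-1) * ((k - j : ℕ) : ℚ) := by
          refine Finset.prod_congr rfl fun j hj => ?_
          rw [Nat.cast_sub (le_of_lt (Finset.mem_range.mp hj))]; ring
      _ = (-1) ^ k * ((∏ j ∈ range k, (k - j) : ℕ) : ℚ) := by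
          rw [Finset.prod_mul_distrib, Finset.prod_const, Finset.card_range, Nat.cast_prod]
      _ = (-1) ^ k * (k.factorial : ℚ) := by
          rw [← Nat.descFactorial_eq_prod_range, Nat.descFactorial_self]
  have h2 : ∏ j ∈ Ico (k + 1) n, ((j : ℚ) - k) = ((n - 1 - k).factorial : ℚ) := by
    rw [Finset.prod_Ico_eq_prod_range]
    have : ∀ i ∈ range (n - (k + 1)), ((k + 1 + i : ℕ) : ℚ) - k = ((i + 1 : ℕ) : ℚ) := by
      intro i _; push_cast; ring
    rw [Finset.prod_congr rfl this, ← Nat.cast_prod]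
    norm_cast
    rw [Finset.prod_range_add_one_eq_factorial]
    congr 1
    omega
  rw [h1, h2]

lemma key (n : ℕ) (hn : 1 ≤ n) :
    (C ((n.factorial : ℚ) * (n : ℚ) ^ (n - 2)) * X ^ (n - 1) : ℚ[X]) =
      ∑ k ∈ range n, C ((-1 : ℚ) ^ k * ((n - 1).choose k : ℚ)) *
        ∏ j ∈ (range n).erase k, (1 - X * C (cc n j)) := by
  rcases eq_or_lt_of_le hn with h1 | hn2
  · -- n = 1
    subst h1
    norm_num [Finset.sum_range_one, Finset.range_one]
  · have hn2 : 2 ≤ n := hn2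
    rw [eq_comm, ← sub_eq_zero]
    set s : Finset ℚ :=
      insert 0 ((((range n).filter fun k => cc n k ≠ 0)).image fun k => (cc n k)⁻¹) with hs
    apply Polynomial.eq_zero_of_natDegree_lt_card_of_eval_eq_zero' _ s
    · -- evaluations
      intro v hv
      rw [Finset.mem_insert] at hv
      rcases hv with rfl | hv
      · -- eval at 0
        simp only [eval_sub, eval_mul, eval_pow, eval_C, eval_X, eval_finset_sum,
          Polynomial.eval_prod, eval_one, zero_mul, sub_zero, Finset.prod_const_one, mul_one]
        rw [zero_pow (show n - 1 ≠ 0 by omega), mul_zero, sub_zero]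
        have h2 := Int.alternating_sum_range_choose_of_ne (n := n - 1) (by omega)
        rw [show range n = range (n - 1 + 1) from by congr 1; omega]
        exact_mod_cast h2
      · -- eval at (cc n k)⁻¹
        obtain ⟨k, hk', rfl⟩ := Finset.mem_image.mp hv
        rw [Finset.mem_filter, Finset.mem_range] at hk'
        obtain ⟨hkn, hck⟩ := hk'
        simp only [eval_sub, eval_mul, eval_pow, eval_C, eval_X, eval_finset_sum,
          Polynomial.eval_prod, eval_one]
        rw [Finset.sum_eq_single_of_mem k (Finset.mem_range.mpr hkn)]
        · -- main term
          have hprod : ∏ j ∈ (range n).erase k, (1 - (cc n k)⁻¹ * cc n j) =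
              ((n : ℚ) ^ (n - 1) * ((-1) ^ k * (k.factorial : ℚ) * ((n - 1 - k).factorial : ℚ)))
                * ((cc n k)⁻¹) ^ (n - 1) := by
            have hterm : ∀ j ∈ (range n).erase k,
                1 - (cc n k)⁻¹ * cc n j = ((n : ℚ) * ((j : ℚ) - k)) * (cc n k)⁻¹ := by
              intro j hj
              rw [← cc_sub n j k]
              field_simp
            rw [Finset.prod_congr rfl hterm, Finset.prod_mul_distrib, Finset.prod_const,
              Finset.card_erase_of_mem (Finset.mem_range.mpr hkn), Finset.card_range,
              Finset.prod_mul_distrib, Finset.prod_const,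
              Finset.card_erase_of_mem (Finset.mem_range.mpr hkn), Finset.card_range,
              prod_erase_sub hkn]
          rw [hprod]
          have hnat : (n - 1).choose k * k.factorial * (n - 1 - k).factorial
              = (n - 1).factorial :=
            Nat.choose_mul_factorial_mul_factorial (show k ≤ n - 1 by omega)
          have hnatq : (((n - 1).choose k : ℚ)) * (k.factorial : ℚ) * ((n - 1 - k).factorial : ℚ)
              = ((n - 1).factorial : ℚ) := by exact_mod_cast congrArg (Nat.cast (R := ℚ)) hnat
          have hfact : (n : ℚ) * ((n - 1).factorial : ℚ) = (n.factorial : ℚ) := by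
            exact_mod_cast congrArg (Nat.cast (R := ℚ)) (Nat.mul_factorial_pred (by omega))
          have hpow : (n : ℚ) ^ (n - 1) = (n : ℚ) ^ (n - 2) * n := by
            rw [← pow_succ]; congr 1; omega
          have hsq : (-1 : ℚ) ^ k * (-1 : ℚ) ^ k = 1 := by
            rw [← mul_pow]; norm_num
          have key2 : ((-1 : ℚ) ^ k * ((n - 1).choose k : ℚ)) *
              ((n : ℚ) ^ (n - 1) * ((-1) ^ k * (k.factorial : ℚ) * ((n - 1 - k).factorial : ℚ)))
              = (n.factorial : ℚ) * (n : ℚ) ^ (n - 2) := by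
            calc ((-1 : ℚ) ^ k * ((n - 1).choose k : ℚ)) *
                ((n : ℚ) ^ (n - 1) * ((-1) ^ k * (k.factorial : ℚ) * ((n - 1 - k).factorial : ℚ)))
                = ((-1 : ℚ) ^ k * (-1 : ℚ) ^ k) *
                  ((((n - 1).choose k : ℚ)) * (k.factorial : ℚ) * ((n - 1 - k).factorial : ℚ)
                    * (n : ℚ) ^ (n - 1)) := by ring
              _ = ((n - 1).factorial : ℚ) * (n : ℚ) ^ (n - 1) := by rw [hsq, one_mul, hnatq]
              _ = ((n : ℚ) * ((n - 1).factorial : ℚ)) * (n : ℚ) ^ (n - 2) := by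
                  rw [hpow]; ring
              _ = (n.factorial : ℚ) * (n : ℚ) ^ (n - 2) := by rw [hfact]
          linear_combination ((cc n k)⁻¹ ^ (n - 1)) * key2
        · -- other terms vanish
          intro m hm hmk
          apply mul_eq_zero_of_right
          apply Finset.prod_eq_zero
            (Finset.mem_erase.mpr ⟨fun h => hmk h.symm, Finset.mem_range.mpr hkn⟩)
          rw [inv_mul_cancel₀ hck]; ring
    · -- card bound
      have hdeg : (∑ k ∈ range n, C ((-1 : ℚ) ^ k * ((n - 1).choose k : ℚ)) *
          ∏ j ∈ (range n).erase k, (1 - X * C (cc n j))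
          - C ((n.factorial : ℚ) * (n : ℚ) ^ (n - 2)) * X ^ (n - 1)).natDegree ≤ n - 1 := by
        apply le_trans (Polynomial.natDegree_sub_le _ _)
        apply max_le
        · apply Polynomial.natDegree_sum_le_of_forall_le
          intro k hk
          apply le_trans (Polynomial.natDegree_mul_le)
          rw [Polynomial.natDegree_C, zero_add]
          apply le_trans (Polynomial.natDegree_prod_le _ _)
          calc ∑ j ∈ (range n).erase k, (1 - X * C (cc n j)).natDegree
              ≤ ∑ j ∈ (range n).erase k, 1 := by
                apply Finset.sum_le_sum
                intro j hj
                apply le_trans (Polynomial.natDegree_sub_le _ _)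
                apply max_le (by simp)
                apply le_trans (Polynomial.natDegree_mul_le)
                simp [Polynomial.natDegree_X]
            _ = n - 1 := by
                rw [Finset.sum_const, smul_eq_mul, mul_one,
                  Finset.card_erase_of_mem hk, Finset.card_range]
        · apply le_trans (Polynomial.natDegree_mul_le)
          rw [Polynomial.natDegree_C, Polynomial.natDegree_X_pow, zero_add]
      apply lt_of_le_of_lt hdeg
      have hinj : Set.InjOn (fun k => (cc n k)⁻¹)
          ((range n).filter fun k => cc n k ≠ 0) := by
        intro a ha b hb hab
        simp only [Finset.coe_filter, Set.mem_setOf_eq] at ha hb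
        exact cc_inj hn (inv_injective hab)
      have h0 : (0 : ℚ) ∉ ((range n).filter fun k => cc n k ≠ 0).image fun k => (cc n k)⁻¹ := by
        simp only [Finset.mem_image, Finset.mem_filter, not_exists]
        rintro k ⟨⟨_, hck⟩, h0⟩
        exact hck (inv_eq_zero.mp h0)
      have hcard1 : #((range n).filter fun k => cc n k = 0) ≤ 1 := by
        apply Finset.card_le_one.mpr
        intro a ha b hb
        rw [Finset.mem_filter] at ha hb
        exact cc_inj hn (ha.2.trans hb.2.symm)
      have hcard2 : #((range n).filter fun k => cc n k ≠ 0) +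
          #((range n).filter fun k => cc n k = 0) = n := by
        rw [add_comm, Finset.card_filter_add_card_filter_not, Finset.card_range]
      rw [hs, Finset.card_insert_of_notMem h0, Finset.card_image_of_injOn hinj]
      omega

/-- The partial fraction expansion
`n^{n-2} x^{n-1} / ∏_{k=0}^{n-1} (1 - x n((n-1)/2 - k))
  = (1/n!) Σ_{k=0}^{n-1} (-1)^k binom(n-1,k) / (1 - x n((n-1)/2 - k))`,
as an identity of rational functions in `x` over `ℚ` (here `x = X`). -/
theorem stmt15 (n : ℕ) (hn : 1 ≤ n) :
    ((n : RatFunc ℚ) ^ (n - 2) * RatFunc.X ^ (n - 1))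
        / ∏ k ∈ Finset.range n,
            (1 - RatFunc.X * RatFunc.C ((n : ℚ) * (((n : ℚ) - 1) / 2 - (k : ℚ))))
      = (1 / (n.factorial : RatFunc ℚ))
          * ∑ k ∈ Finset.range n,
              ((-1 : RatFunc ℚ) ^ k * ((n - 1).choose k : RatFunc ℚ))
                / (1 - RatFunc.X * RatFunc.C ((n : ℚ) * (((n : ℚ) - 1) / 2 - (k : ℚ)))) := by
  classical
  have hfac : ∀ a : ℚ, (1 - RatFunc.X * RatFunc.C a) =
      algebraMap ℚ[X] (RatFunc ℚ) (1 - X * C a) := by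
    intro a
    rw [map_sub, map_one, map_mul, RatFunc.algebraMap_X, RatFunc.algebraMap_C]
  have hd0 : ∀ a : ℚ, (1 - X * C a : ℚ[X]) ≠ 0 := by
    intro a h
    have h2 := congrArg (Polynomial.eval 0) h
    simp at h2
  have hD : ∀ a : ℚ, (1 - RatFunc.X * RatFunc.C a) ≠ 0 := by
    intro a
    rw [hfac a]
    exact RatFunc.algebraMap_ne_zero (hd0 a)
  have hfacne : (n.factorial : RatFunc ℚ) ≠ 0 := by
    rw [← map_natCast (algebraMap ℚ[X] (RatFunc ℚ))]
    exact RatFunc.algebraMap_ne_zero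
      (by exact_mod_cast (Nat.cast_ne_zero (R := ℚ[X])).mpr n.factorial_ne_zero)
  rw [div_eq_iff (Finset.prod_ne_zero_iff.mpr fun k _ => hD _)]
  rw [mul_assoc, Finset.sum_mul]
  have hstep : ∀ k ∈ range n,
      ((-1 : RatFunc ℚ) ^ k * ((n - 1).choose k : RatFunc ℚ))
          / (1 - RatFunc.X * RatFunc.C ((n : ℚ) * (((n : ℚ) - 1) / 2 - (k : ℚ))))
          * ∏ j ∈ range n, (1 - RatFunc.X * RatFunc.C ((n : ℚ) * (((n : ℚ) - 1) / 2 - (j : ℚ))))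
      = ((-1 : RatFunc ℚ) ^ k * ((n - 1).choose k : RatFunc ℚ))
          * ∏ j ∈ (range n).erase k,
              (1 - RatFunc.X * RatFunc.C ((n : ℚ) * (((n : ℚ) - 1) / 2 - (j : ℚ)))) := by
    intro k hk
    rw [← Finset.mul_prod_erase _ _ hk, div_mul_eq_mul_div, mul_comm
      (1 - RatFunc.X * RatFunc.C ((n : ℚ) * (((n : ℚ) - 1) / 2 - (k : ℚ)))), ← mul_assoc,
      mul_div_cancel_right₀ _ (hD _)]
  rw [Finset.sum_congr rfl hstep]
  have hk := congrArg (algebraMap ℚ[X] (RatFunc ℚ)) (key n hn)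
  simp only [cc, Polynomial.C_mul, Polynomial.C_pow, map_natCast, Polynomial.C_neg,
    Polynomial.C_1, map_sum, map_mul, map_prod, map_pow, map_sub, map_one, map_neg,
    RatFunc.algebraMap_X, RatFunc.algebraMap_C] at hk
  rw [one_div, inv_mul_eq_div, eq_div_iff hfacne]
  simp only [map_mul, map_sub, map_natCast]
  linear_combination hk
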